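/- Let G ∈ ℝ^{K×d}, y ∈ ℝ^K, let Γ ∈ ℝ^{K×K} be symmetric positive semidefinite, let Q ∈ ℝ^{d×d} be symmetric positive semidefinite and b ∈ ℝ^d, defining the convex quadratic constraint A(u) = ½ uᵀQu + bᵀu with gradient ∇A(u) = Qu + b. Let Λ : [0,∞) → ℝ be continuous with Λ(t) ≥ 0 for all t, and let u^1, …, u^J : [0,∞) → ℝ^d be differentiable functions satisfying, for every j and every t ≥ 0, (d/dt) u^j(t) = −C(t) ( GᵀΓ(G u^j(t) − y) + Λ(t) (Q u^j(t) + b) ), where C(t) = (1/J)∑_k (u^k(t) − ū(t))(u^k(t) − ū(t))ᵀ and ū(t) = (1/J)∑_k u^k(t). Then the ensemble spread E(t) = (1/J)∑_{j=1}^J ‖u^j(t) − ū(t)‖² is nonincreasing in t; in particular E(t) ≤ E(0) for all t ≥ 0. -/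

import Mathlib

open Matrix

private lemma sum_mulVec' {ι d : Type*} [Fintype ι] [Fintype d]
    (A : ι → Matrix d d ℝ) (v : d → ℝ) :
    (∑ k, A k) *ᵥ v = ∑ k, A k *ᵥ v := by
  funext i
  simp only [Matrix.mulVec, dotProduct, Matrix.sum_apply, Finset.sum_mul, Finset.sum_apply]
  rw [Finset.sum_comm]

private lemma vecMulVec_mulVec' {d : Type*} [Fintype d] (x z w : d → ℝ) :
    vecMulVec x z *ᵥ w = (z ⬝ᵥ w) • x := by
  funext i
  simp only [Matrix.mulVec, vecMulVec_apply, dotProduct, Pi.smul_apply, smul_eq_mul,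
    Finset.sum_mul]
  exact Finset.sum_congr rfl fun l _ => by ring

private lemma dotProduct_sum' {ι d : Type*} [Fintype ι] [Fintype d]
    (v : d → ℝ) (f : ι → d → ℝ) :
    v ⬝ᵥ (∑ k, f k) = ∑ k, v ⬝ᵥ f k := by
  simp only [dotProduct, Finset.sum_apply, Finset.mul_sum]
  rw [Finset.sum_comm]

private lemma key_sq {J d : ℕ} (v w : Fin J → Fin d → ℝ) :
    0 ≤ ∑ j, ∑ k, (v j ⬝ᵥ v k) * (w k ⬝ᵥ w j) := by
  have expand : ∀ j k : Fin J, (v j ⬝ᵥ v k) * (w k ⬝ᵥ w j)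
      = ∑ a, ∑ b, (v j a * w j b) * (v k a * w k b) := by
    intro j k
    rw [dotProduct, dotProduct, Finset.sum_mul_sum]
    exact Finset.sum_congr rfl fun a _ => Finset.sum_congr rfl fun b _ => by ring
  have expand2 : ∀ a b : Fin d, (∑ j, v j a * w j b) ^ 2
      = ∑ j, ∑ k, (v j a * w j b) * (v k a * w k b) := by
    intro a b
    rw [pow_two, Finset.sum_mul_sum]
  have h : ∑ j, ∑ k, (v j ⬝ᵥ v k) * (w k ⬝ᵥ w j)
      = ∑ a, ∑ b, (∑ j, v j a * w j b) ^ 2 := by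
    simp only [expand, expand2]
    calc ∑ j, ∑ k, ∑ a, ∑ b, (v j a * w j b) * (v k a * w k b)
        = ∑ j, ∑ a, ∑ k, ∑ b, (v j a * w j b) * (v k a * w k b) :=
          Finset.sum_congr rfl fun j _ => Finset.sum_comm
      _ = ∑ a, ∑ j, ∑ k, ∑ b, (v j a * w j b) * (v k a * w k b) := Finset.sum_comm
      _ = ∑ a, ∑ j, ∑ b, ∑ k, (v j a * w j b) * (v k a * w k b) :=
          Finset.sum_congr rfl fun a _ =>
            Finset.sum_congr rfl fun j _ => Finset.sum_comm
      _ = ∑ a, ∑ b, ∑ j, ∑ k, (v j a * w j b) * (v k a * w k b) :=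
          Finset.sum_congr rfl fun a _ => Finset.sum_comm
  rw [h]
  exact Finset.sum_nonneg fun a _ => Finset.sum_nonneg fun b _ => sq_nonneg _

theorem stmt_9 {K d J : ℕ} (hJ : 0 < J)
    (G : Matrix (Fin K) (Fin d) ℝ) (y : Fin K → ℝ)
    (Γ : Matrix (Fin K) (Fin K) ℝ) (hΓ : Γ.PosSemidef)
    (Q : Matrix (Fin d) (Fin d) ℝ) (hQ : Q.PosSemidef) (b : Fin d → ℝ)
    (Λ : ℝ → ℝ) (hΛcont : ContinuousOn Λ (Set.Ici 0))
    (hΛpos : ∀ t, 0 ≤ t → 0 ≤ Λ t)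
    (u : Fin J → ℝ → (Fin d → ℝ))
    (ubar : ℝ → (Fin d → ℝ)) (hubar : ∀ t, ubar t = (1 / (J : ℝ)) • ∑ k, u k t)
    (C : ℝ → Matrix (Fin d) (Fin d) ℝ)
    (hC : ∀ t, C t = (1 / (J : ℝ)) • ∑ k, vecMulVec (u k t - ubar t) (u k t - ubar t))
    (hode : ∀ j t, 0 ≤ t → HasDerivWithinAt (u j)
      (-(C t *ᵥ (Gᵀ *ᵥ (Γ *ᵥ (G *ᵥ u j t - y)) + Λ t • (Q *ᵥ u j t + b))))
      (Set.Ici 0) t)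
    (E : ℝ → ℝ)
    (hE : ∀ t, E t = (1 / (J : ℝ)) * ∑ j, (u j t - ubar t) ⬝ᵥ (u j t - ubar t)) :
    AntitoneOn E (Set.Ici 0) ∧ ∀ t, 0 ≤ t → E t ≤ E 0 := by
  have hJ' : (J : ℝ) ≠ 0 := Nat.cast_ne_zero.mpr hJ.ne'
  set e : Fin J → ℝ → (Fin d → ℝ) := fun j t => u j t - ubar t with he
  set M : ℝ → Matrix (Fin d) (Fin d) ℝ := fun t => Gᵀ * Γ * G + Λ t • Q with hM
  set r : ℝ → (Fin d → ℝ) := fun t => Λ t • b - Gᵀ *ᵥ (Γ *ᵥ y) with hr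
  -- rewrite the ODE right-hand side in affine form
  have hode' : ∀ j t, 0 ≤ t →
      HasDerivWithinAt (u j) (-(C t *ᵥ (M t *ᵥ u j t + r t))) (Set.Ici 0) t := by
    intro j t ht
    convert hode j t ht using 3
    simp only [hM, hr, add_mulVec, ← mulVec_mulVec, smul_mulVec,
      mulVec_sub, mulVec_add, smul_add, smul_sub]
    abel
  -- the ensemble mean satisfies the same ODE
  have hmean : ∀ t, 0 ≤ t →
      HasDerivWithinAt ubar (-(C t *ᵥ (M t *ᵥ ubar t + r t))) (Set.Ici 0) t := by
    intro t ht
    have h1 : HasDerivWithinAt (fun s => (1 / (J : ℝ)) • ∑ k, u k s)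
        ((1 / (J : ℝ)) • ∑ k, -(C t *ᵥ (M t *ᵥ u k t + r t))) (Set.Ici 0) t :=
      (HasDerivWithinAt.fun_sum fun k _ => hode' k t ht).fun_const_smul _
    have h2 : (fun s => (1 / (J : ℝ)) • ∑ k, u k s) = ubar := by
      funext s; rw [hubar]
    rw [h2] at h1
    convert h1 using 1
    have hsum1 : ∑ k, M t *ᵥ u k t = M t *ᵥ ∑ k, u k t := by
      simp only [← Matrix.mulVecLin_apply, ← map_sum]
    have hsum : ∑ k, (M t *ᵥ u k t + r t) = M t *ᵥ (∑ k, u k t) + (J : ℝ) • r t := by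
      rw [Finset.sum_add_distrib, hsum1, Finset.sum_const, Finset.card_univ,
        Fintype.card_fin, Nat.cast_smul_eq_nsmul ℝ]
    have hCsum : ∑ k, -(C t *ᵥ (M t *ᵥ u k t + r t))
        = -(C t *ᵥ (M t *ᵥ (∑ k, u k t) + (J : ℝ) • r t)) := by
      rw [← hsum]
      have : ∑ k, C t *ᵥ (M t *ᵥ u k t + r t) = C t *ᵥ ∑ k, (M t *ᵥ u k t + r t) := by
        simp only [← Matrix.mulVecLin_apply, ← map_sum]
      rw [← this, Finset.sum_neg_distrib]
    rw [hCsum, hubar t, smul_neg]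
    congr 1
    rw [← mulVec_smul, smul_add, mulVec_add, mulVec_smul, smul_smul, ← mulVec_add]
    congr 2
    rw [one_div, inv_mul_cancel₀ hJ', one_smul]
  -- the spread vectors satisfy a linear ODE
  have hspread : ∀ j t, 0 ≤ t →
      HasDerivWithinAt (fun s => e j s) (-(C t *ᵥ (M t *ᵥ e j t))) (Set.Ici 0) t := by
    intro j t ht
    have h := (hode' j t ht).sub (hmean t ht)
    refine h.congr_deriv ?_
    simp only [he, mulVec_sub, mulVec_add]
    abel
  -- derivative of E
  have hEd : ∀ t, 0 ≤ t → HasDerivWithinAt E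
      ((1 / (J : ℝ)) * ∑ j, 2 * (e j t ⬝ᵥ -(C t *ᵥ (M t *ᵥ e j t)))) (Set.Ici 0) t := by
    intro t ht
    have hEfun : E = fun s => (1 / (J : ℝ)) * ∑ j, e j s ⬝ᵥ e j s := by
      funext s; rw [hE]
    rw [hEfun]
    refine HasDerivWithinAt.const_mul _ (HasDerivWithinAt.fun_sum fun j _ => ?_)
    have hj := hspread j t ht
    have hcomp : ∀ a, HasDerivWithinAt (fun s => e j s a)
        ((-(C t *ᵥ (M t *ᵥ e j t))) a) (Set.Ici 0) t := hasDerivWithinAt_pi.1 hj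
    have : HasDerivWithinAt (fun s => ∑ a, e j s a * e j s a)
        (∑ a, ((-(C t *ᵥ (M t *ᵥ e j t))) a * e j t a
          + e j t a * (-(C t *ᵥ (M t *ᵥ e j t))) a)) (Set.Ici 0) t :=
      HasDerivWithinAt.fun_sum fun a _ => (hcomp a).mul (hcomp a)
    have hval : 2 * (e j t ⬝ᵥ -(C t *ᵥ (M t *ᵥ e j t)))
        = ∑ a, ((-(C t *ᵥ (M t *ᵥ e j t))) a * e j t a
          + e j t a * (-(C t *ᵥ (M t *ᵥ e j t))) a) := by
      simp only [dotProduct, Finset.mul_sum, Pi.neg_apply]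
      refine Finset.sum_congr rfl fun a _ => ?_
      ring
    rw [hval]
    exact this
  -- the derivative is nonpositive
  have hnonpos : ∀ t, 0 ≤ t →
      (1 / (J : ℝ)) * ∑ j, 2 * (e j t ⬝ᵥ -(C t *ᵥ (M t *ᵥ e j t))) ≤ 0 := by
    intro t ht
    -- M t is positive semidefinite
    have hMt : (M t).PosSemidef := by
      refine Matrix.PosSemidef.add ?_ ?_
      · have := hΓ.conjTranspose_mul_mul_same G
        rwa [conjTranspose_eq_transpose_of_trivial] at this
      · exact hQ.smul (hΛpos t ht)
    obtain ⟨N, hNherm, hNN⟩ : ∃ N : Matrix (Fin d) (Fin d) ℝ, Nᵀ = N ∧ N * N = M t := by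
      open MatrixOrder in
      have h0 : 0 ≤ M t := Matrix.nonneg_iff_posSemidef.mpr hMt
      open MatrixOrder in
      refine ⟨CFC.sqrt (M t), ?_, CFC.sqrt_mul_sqrt_self (M t) h0⟩
      have := (CFC.sqrt_nonneg (M t)).isSelfAdjoint.star_eq
      rwa [star_eq_conjTranspose, conjTranspose_eq_transpose_of_trivial] at this
    -- rewrite each summand
    have hterm : ∀ j, e j t ⬝ᵥ (C t *ᵥ (M t *ᵥ e j t))
        = (1 / (J : ℝ)) * ∑ k, (e j t ⬝ᵥ e k t) * ((N *ᵥ e k t) ⬝ᵥ (N *ᵥ e j t)) := by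
      intro j
      have hMsplit : ∀ k, e k t ⬝ᵥ (M t *ᵥ e j t) = (N *ᵥ e k t) ⬝ᵥ (N *ᵥ e j t) := by
        intro k
        rw [← hNN, ← mulVec_mulVec, dotProduct_mulVec, ← mulVec_transpose, hNherm]
      rw [hC t, smul_mulVec, sum_mulVec', dotProduct_smul]
      simp only [vecMulVec_mulVec', Finset.smul_sum]
      rw [dotProduct_sum']
      simp only [dotProduct_smul, smul_eq_mul, Finset.mul_sum]
      refine Finset.sum_congr rfl fun k _ => ?_
      rw [hMsplit k]
      ring
    have hkey : 0 ≤ ∑ j, ∑ k, (e j t ⬝ᵥ e k t) * ((N *ᵥ e k t) ⬝ᵥ (N *ᵥ e j t)) := by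
      exact key_sq (fun j => e j t) (fun j => N *ᵥ e j t)
    have hsumterm : ∑ j, 2 * (e j t ⬝ᵥ -(C t *ᵥ (M t *ᵥ e j t)))
        = -((2 / (J : ℝ)) * ∑ j, ∑ k, (e j t ⬝ᵥ e k t) * ((N *ᵥ e k t) ⬝ᵥ (N *ᵥ e j t))) := by
      have hterm2 : ∀ j, 2 * (e j t ⬝ᵥ -(C t *ᵥ (M t *ᵥ e j t)))
          = -((2 / (J : ℝ)) * ∑ k, (e j t ⬝ᵥ e k t) * ((N *ᵥ e k t) ⬝ᵥ (N *ᵥ e j t))) := by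
        intro j
        rw [dotProduct_neg, hterm j]
        ring
      rw [Finset.sum_congr rfl fun j _ => hterm2 j, Finset.sum_neg_distrib, ← Finset.mul_sum]
    rw [hsumterm]
    have h2 : 0 ≤ (2 / (J : ℝ)) * ∑ j, ∑ k, (e j t ⬝ᵥ e k t) * ((N *ᵥ e k t) ⬝ᵥ (N *ᵥ e j t)) :=
      mul_nonneg (by positivity) hkey
    have h1 : 0 ≤ (1 : ℝ) / (J : ℝ) := by positivity
    nlinarith
  -- conclude
  have hanti : AntitoneOn E (Set.Ici 0) := by
    have hcont : ContinuousOn E (Set.Ici 0) := fun t ht => (hEd t ht).continuousWithinAt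
    have hderiv : ∀ x ∈ interior (Set.Ici (0 : ℝ)), HasDerivAt E
        ((1 / (J : ℝ)) * ∑ j, 2 * (e j x ⬝ᵥ -(C x *ᵥ (M x *ᵥ e j x)))) x := by
      intro x hx
      rw [interior_Ici] at hx
      exact (hEd x (le_of_lt hx)).hasDerivAt (Ici_mem_nhds hx)
    refine antitoneOn_of_deriv_nonpos (convex_Ici 0) hcont
      (fun x hx => ((hderiv x hx).differentiableAt).differentiableWithinAt) ?_
    intro x hx
    rw [(hderiv x hx).deriv]
    have hx' : (0 : ℝ) < x := by rwa [interior_Ici] at hx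
    exact hnonpos x hx'.le
  exact ⟨hanti, fun t ht => hanti (Set.self_mem_Ici) ht ht⟩
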